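/- (Blei's inequality) Let A and B be finite non-void index sets and let (a_{ij})_{(i,j) ∈ A×B} be a matrix of nonnegative real numbers; denote its columns by α_j = (a_{ij})_{i ∈ A} and its rows by β_i = (a_{ij})_{j ∈ B}. Let q, s_1, s_2 ≥ 1 with q > max(s_1, s_2), and define w(x,y) = (q²(x+y) − 2qxy)/(q² − xy) and f(x,y) = (q²x − qxy)/(q²(x+y) − 2qxy). Then (Σ_{(i,j) ∈ A×B} a_{ij}^{w(s_1,s_2)})^{1/w(s_1,s_2)} ≤ (Σ_{i ∈ A} ‖β_i‖_q^{s_1})^{f(s_1,s_2)/s_1} · (Σ_{j ∈ B} ‖α_j‖_q^{s_2})^{f(s_2,s_1)/s_2}. -/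

import Mathlib

set_option maxHeartbeats 1000000

open Finset


open scoped BigOperators

/-- `w(x,y) = (q²(x+y) − 2qxy)/(q² − xy)`. -/
noncomputable def bleiW (q x y : ℝ) : ℝ := (q ^ 2 * (x + y) - 2 * q * x * y) / (q ^ 2 - x * y)

/-- `f(x,y) = (q²x − qxy)/(q²(x+y) − 2qxy)`. -/
noncomputable def bleiF (q x y : ℝ) : ℝ :=
  (q ^ 2 * x - q * x * y) / (q ^ 2 * (x + y) - 2 * q * x * y)

/-- Generalized Minkowski inequality for finite sums. -/
lemma minkowski_sum {A ι : Type*} [Fintype A] (t : Finset ι) (y : A → ι → ℝ)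
    (hy : ∀ i j, 0 ≤ y i j) {p : ℝ} (hp : 1 ≤ p) :
    (∑ i : A, (∑ j ∈ t, y i j) ^ p) ^ (1 / p) ≤ ∑ j ∈ t, (∑ i : A, y i j ^ p) ^ (1 / p) := by
  classical
  induction t using Finset.induction_on with
  | empty =>
      simp [Real.zero_rpow (by positivity : p ≠ 0),
        Real.zero_rpow (by positivity : p⁻¹ ≠ 0)]
  | insert _ _ hnotmem ih =>
      rename_i c t'
      rw [Finset.sum_insert hnotmem]
      simp_rw [Finset.sum_insert hnotmem]
      calc (∑ i : A, (y i c + ∑ j ∈ t', y i j) ^ p) ^ (1 / p)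
          ≤ (∑ i : A, (y i c) ^ p) ^ (1/p) + (∑ i : A, (∑ j ∈ t', y i j) ^ p) ^ (1/p) :=
            Real.Lp_add_le_of_nonneg Finset.univ hp (fun i _ => hy i c)
              (fun i _ => Finset.sum_nonneg fun j _ => hy i j)
        _ ≤ (∑ i : A, (y i c) ^ p) ^ (1/p) + ∑ j ∈ t', (∑ i : A, y i j ^ p) ^ (1/p) := by
            exact add_le_add_right ih _

lemma blei_aux {A B : Type*} [Fintype A] [Fintype B]
    (a : A → B → ℝ) (ha : ∀ i j, 0 ≤ a i j)
    (q s₁ s₂ u₁ u₂ w : ℝ)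
    (hq : 0 < q) (hs₁ : 0 < s₁) (hs₂ : 0 < s₂)
    (hu₁ : 0 < u₁) (hu₂ : 0 < u₂) (hw : w = u₁ + u₂)
    (h1 : u₁ < q) (h2 : u₁ < s₁) (h3 : s₂ ≤ q)
    (hc1 : u₁ / q + u₂ / s₂ = 1) (hc2 : u₁ / s₁ + u₂ / q = 1) :
    (∑ i : A, ∑ j : B, a i j ^ w) ^ (1 / w) ≤
      (∑ i : A, (∑ j : B, a i j ^ q) ^ (s₁ / q)) ^ (u₁ / (w * s₁)) *
        (∑ j : B, (∑ i : A, a i j ^ q) ^ (s₂ / q)) ^ (u₂ / (w * s₂)) := by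
  have hwpos : 0 < w := by rw [hw]; positivity
  set P : A → ℝ := fun i => ∑ j : B, a i j ^ q with hP
  set Q : A → ℝ := fun i => ∑ j : B, a i j ^ s₂ with hQ
  set X : ℝ := ∑ i : A, P i ^ (s₁ / q) with hX
  set Z : ℝ := ∑ j : B, (∑ i : A, a i j ^ q) ^ (s₂ / q) with hZ
  have hPn : ∀ i, 0 ≤ P i := fun i => Finset.sum_nonneg fun j _ => Real.rpow_nonneg (ha i j) _
  have hQn : ∀ i, 0 ≤ Q i := fun i => Finset.sum_nonneg fun j _ => Real.rpow_nonneg (ha i j) _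
  have hXn : 0 ≤ X := Finset.sum_nonneg fun i _ => Real.rpow_nonneg (hPn i) _
  have hZn : 0 ≤ Z := Finset.sum_nonneg fun j _ =>
    Real.rpow_nonneg (Finset.sum_nonneg fun i _ => Real.rpow_nonneg (ha i j) _) _
  -- Step A: Hölder in j, for each i
  have stepA : ∀ i : A, ∑ j : B, a i j ^ w ≤ P i ^ (u₁ / q) * Q i ^ (u₂ / s₂) := by
    intro i
    have hconj : (q / u₁).HolderConjugate (s₂ / u₂) :=
      Real.holderConjugate_iff.mpr ⟨by rw [lt_div_iff₀ hu₁]; linarith, by rw [inv_div, inv_div]; exact hc1⟩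
    have h := Real.inner_le_Lp_mul_Lq_of_nonneg (s := Finset.univ) hconj
      (f := fun j => a i j ^ u₁) (g := fun j => a i j ^ u₂)
      (fun j _ => Real.rpow_nonneg (ha i j) _) (fun j _ => Real.rpow_nonneg (ha i j) _)
    calc ∑ j : B, a i j ^ w = ∑ j : B, a i j ^ u₁ * a i j ^ u₂ := by
          refine Finset.sum_congr rfl fun j _ => ?_
          rw [hw, Real.rpow_add' (ha i j) (by positivity)]
      _ ≤ (∑ j : B, (a i j ^ u₁) ^ (q / u₁)) ^ (1 / (q / u₁)) *
            (∑ j : B, (a i j ^ u₂) ^ (s₂ / u₂)) ^ (1 / (s₂ / u₂)) := h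
      _ = P i ^ (u₁ / q) * Q i ^ (u₂ / s₂) := by
          rw [one_div_div, one_div_div]
          congr 1
          · congr 1
            refine Finset.sum_congr rfl fun j _ => ?_
            rw [← Real.rpow_mul (ha i j)]
            congr 1
            field_simp
          · congr 1
            refine Finset.sum_congr rfl fun j _ => ?_
            rw [← Real.rpow_mul (ha i j)]
            congr 1
            field_simp
  -- Step B : Hölder in i
  have stepB : ∑ i : A, P i ^ (u₁ / q) * Q i ^ (u₂ / s₂) ≤
      X ^ (u₁ / s₁) * (∑ i : A, Q i ^ (q / s₂)) ^ (u₂ / q) := by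
    have hconj : (s₁ / u₁).HolderConjugate (q / u₂) :=
      Real.holderConjugate_iff.mpr ⟨by rw [lt_div_iff₀ hu₁]; linarith, by rw [inv_div, inv_div]; exact hc2⟩
    have h := Real.inner_le_Lp_mul_Lq_of_nonneg (s := Finset.univ) hconj
      (f := fun i => P i ^ (u₁ / q)) (g := fun i => Q i ^ (u₂ / s₂))
      (fun i _ => Real.rpow_nonneg (hPn i) _) (fun i _ => Real.rpow_nonneg (hQn i) _)
    refine h.trans (le_of_eq ?_)
    rw [one_div_div, one_div_div]
    congr 1
    · congr 1
      refine Finset.sum_congr rfl fun i _ => ?_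
      rw [← Real.rpow_mul (hPn i)]
      congr 1
      field_simp
    · congr 1
      refine Finset.sum_congr rfl fun i _ => ?_
      rw [← Real.rpow_mul (hQn i)]
      congr 1
      field_simp
  -- Step C : Minkowski
  have stepC : ∑ i : A, Q i ^ (q / s₂) ≤ Z ^ (q / s₂) := by
    have hm := minkowski_sum (A := A) Finset.univ (fun i j => a i j ^ s₂)
      (fun i j => Real.rpow_nonneg (ha i j) _) (p := q / s₂)
      (by rw [le_div_iff₀ hs₂]; linarith)
    have hm' : (∑ i : A, Q i ^ (q / s₂)) ^ (s₂ / q) ≤ Z := by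
      rw [show s₂ / q = 1 / (q / s₂) by rw [one_div_div]]
      refine hm.trans (le_of_eq ?_)
      rw [hZ]
      refine Finset.sum_congr rfl fun j _ => ?_
      rw [one_div_div]
      congr 1
      refine Finset.sum_congr rfl fun i _ => ?_
      rw [← Real.rpow_mul (ha i j)]
      congr 1
      field_simp
    have hsum : 0 ≤ ∑ i : A, Q i ^ (q / s₂) :=
      Finset.sum_nonneg fun i _ => Real.rpow_nonneg (hQn i) _
    calc ∑ i : A, Q i ^ (q / s₂)
        = ((∑ i : A, Q i ^ (q / s₂)) ^ (s₂ / q)) ^ (q / s₂) := by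
          rw [← Real.rpow_mul hsum]
          rw [show s₂ / q * (q / s₂) = 1 by field_simp]
          rw [Real.rpow_one]
      _ ≤ Z ^ (q / s₂) := by
          refine Real.rpow_le_rpow (Real.rpow_nonneg hsum _) hm' (by positivity)
  -- Assemble
  have main : ∑ i : A, ∑ j : B, a i j ^ w ≤ X ^ (u₁ / s₁) * Z ^ (u₂ / s₂) := by
    calc ∑ i : A, ∑ j : B, a i j ^ w
        ≤ ∑ i : A, P i ^ (u₁ / q) * Q i ^ (u₂ / s₂) :=
          Finset.sum_le_sum fun i _ => stepA i
      _ ≤ X ^ (u₁ / s₁) * (∑ i : A, Q i ^ (q / s₂)) ^ (u₂ / q) := stepB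
      _ ≤ X ^ (u₁ / s₁) * (Z ^ (q / s₂)) ^ (u₂ / q) :=
          mul_le_mul_of_nonneg_left
            (Real.rpow_le_rpow
              (Finset.sum_nonneg fun i _ => Real.rpow_nonneg (hQn i) _) stepC (by positivity))
            (Real.rpow_nonneg hXn _)
      _ = X ^ (u₁ / s₁) * Z ^ (u₂ / s₂) := by
          rw [← Real.rpow_mul hZn,
            show q / s₂ * (u₂ / q) = u₂ / s₂ by
              rw [div_mul_div_comm, mul_comm q u₂, mul_comm s₂ q, mul_comm u₂ q,
                mul_div_mul_left _ _ (ne_of_gt hq)]]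
  have hSn : 0 ≤ ∑ i : A, ∑ j : B, a i j ^ w :=
    Finset.sum_nonneg fun i _ => Finset.sum_nonneg fun j _ => Real.rpow_nonneg (ha i j) _
  calc (∑ i : A, ∑ j : B, a i j ^ w) ^ (1 / w)
      ≤ (X ^ (u₁ / s₁) * Z ^ (u₂ / s₂)) ^ (1 / w) :=
        Real.rpow_le_rpow hSn main (by positivity)
    _ = X ^ (u₁ / (w * s₁)) * Z ^ (u₂ / (w * s₂)) := by
        rw [Real.mul_rpow (Real.rpow_nonneg hXn _) (Real.rpow_nonneg hZn _),
          ← Real.rpow_mul hXn, ← Real.rpow_mul hZn,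
          show u₁ / s₁ * (1 / w) = u₁ / (w * s₁) by
            rw [div_mul_div_comm, mul_one, mul_comm s₁ w],
          show u₂ / s₂ * (1 / w) = u₂ / (w * s₂) by
            rw [div_mul_div_comm, mul_one, mul_comm s₂ w]]


/-- **Blei's inequality.** For finite nonempty index sets `A`, `B`, a matrix
`(a_{ij})` of nonnegative reals, and `q, s₁, s₂ ≥ 1` with `q > max(s₁, s₂)`,
`(Σ_{i,j} a_{ij}^{w(s₁,s₂)})^{1/w(s₁,s₂)}
  ≤ (Σ_i ‖β_i‖_q^{s₁})^{f(s₁,s₂)/s₁} (Σ_j ‖α_j‖_q^{s₂})^{f(s₂,s₁)/s₂}`,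
where `β_i` are the rows and `α_j` the columns of the matrix. -/
theorem blei_inequality {A B : Type*} [Fintype A] [Fintype B] [Nonempty A] [Nonempty B]
    (a : A → B → ℝ) (ha : ∀ i j, 0 ≤ a i j) (q s₁ s₂ : ℝ)
    (hs₁ : 1 ≤ s₁) (hs₂ : 1 ≤ s₂) (hq : max s₁ s₂ < q) :
    (∑ i : A, ∑ j : B, a i j ^ bleiW q s₁ s₂) ^ (1 / bleiW q s₁ s₂) ≤
      (∑ i : A, ((∑ j : B, |a i j| ^ q) ^ (1 / q)) ^ s₁) ^ (bleiF q s₁ s₂ / s₁) *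
        (∑ j : B, ((∑ i : A, |a i j| ^ q) ^ (1 / q)) ^ s₂) ^ (bleiF q s₂ s₁ / s₂) := by
  have hq1 : s₁ < q := lt_of_le_of_lt (le_max_left _ _) hq
  have hq2 : s₂ < q := lt_of_le_of_lt (le_max_right _ _) hq
  have hqpos : (0:ℝ) < q := by linarith
  have hs₁' : (0:ℝ) < s₁ := by linarith
  have hs₂' : (0:ℝ) < s₂ := by linarith
  have hE : (0:ℝ) < q ^ 2 - s₁ * s₂ := by nlinarith
  have hD : (0:ℝ) < q ^ 2 * (s₁ + s₂) - 2 * q * s₁ * s₂ := by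
    nlinarith [mul_pos (mul_pos hqpos hs₁') (sub_pos.2 hq2),
      mul_pos (mul_pos hqpos hs₂') (sub_pos.2 hq1)]
  have hD' : (0:ℝ) < q ^ 2 * (s₂ + s₁) - 2 * q * s₂ * s₁ := by nlinarith [hD]
  set u₁ : ℝ := q * s₁ * (q - s₂) / (q ^ 2 - s₁ * s₂) with hu₁def
  set u₂ : ℝ := q * s₂ * (q - s₁) / (q ^ 2 - s₁ * s₂) with hu₂def
  have hu₁ : 0 < u₁ :=
    div_pos (mul_pos (mul_pos hqpos hs₁') (by linarith)) hE
  have hu₂ : 0 < u₂ :=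
    div_pos (mul_pos (mul_pos hqpos hs₂') (by linarith)) hE
  have hw : bleiW q s₁ s₂ = u₁ + u₂ := by
    rw [bleiW, hu₁def, hu₂def]
    field_simp
    ring
  have hwpos : 0 < bleiW q s₁ s₂ := by rw [hw]; positivity
  have h1 : u₁ < q := by
    rw [hu₁def, div_lt_iff₀ hE]
    nlinarith [mul_lt_mul_of_pos_left hq1 (mul_pos hqpos hqpos)]
  have h2 : u₁ < s₁ := by
    rw [hu₁def, div_lt_iff₀ hE]
    nlinarith [mul_lt_mul_of_pos_left hq1 (mul_pos hs₁' hs₂')]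
  have hc1 : u₁ / q + u₂ / s₂ = 1 := by
    rw [hu₁def, hu₂def]; field_simp; ring
  have hc2 : u₁ / s₁ + u₂ / q = 1 := by
    rw [hu₁def, hu₂def]; field_simp; ring
  have key := blei_aux a ha q s₁ s₂ u₁ u₂ (bleiW q s₁ s₂) hqpos hs₁' hs₂' hu₁ hu₂ hw
    h1 h2 (le_of_lt hq2) hc1 hc2
  have e1 : ∀ i : A, ((∑ j : B, |a i j| ^ q) ^ (1 / q)) ^ s₁ = (∑ j : B, a i j ^ q) ^ (s₁ / q) := by
    intro i
    rw [show (∑ j : B, |a i j| ^ q) = ∑ j : B, a i j ^ q from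
      Finset.sum_congr rfl fun j _ => by rw [abs_of_nonneg (ha i j)]]
    rw [← Real.rpow_mul (Finset.sum_nonneg fun j _ => Real.rpow_nonneg (ha i j) _),
      show 1 / q * s₁ = s₁ / q by ring]
  have e2 : ∀ j : B, ((∑ i : A, |a i j| ^ q) ^ (1 / q)) ^ s₂ = (∑ i : A, a i j ^ q) ^ (s₂ / q) := by
    intro j
    rw [show (∑ i : A, |a i j| ^ q) = ∑ i : A, a i j ^ q from
      Finset.sum_congr rfl fun i _ => by rw [abs_of_nonneg (ha i j)]]
    rw [← Real.rpow_mul (Finset.sum_nonneg fun i _ => Real.rpow_nonneg (ha i j) _),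
      show 1 / q * s₂ = s₂ / q by ring]
  have f1 : bleiF q s₁ s₂ / s₁ = u₁ / (bleiW q s₁ s₂ * s₁) := by
    rw [hu₁def, bleiW, bleiF]
    field_simp [hD.ne', hD'.ne', hE.ne']
  have f2 : bleiF q s₂ s₁ / s₂ = u₂ / (bleiW q s₁ s₂ * s₂) := by
    rw [hu₂def, bleiW, bleiF]
    field_simp [hD.ne', hD'.ne', hE.ne']
    rw [mul_comm (q ^ 2 - s₂ * s₁), mul_div_mul_right _ _ (by rw [mul_comm s₂ s₁]; exact hE.ne'),
      add_comm s₂ s₁]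
  simp_rw [e1, e2, f1, f2]
  exact key
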